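/- Let s₀ ∈ S' and σ ∈ Σ^Opt. Then Pr_{σ,s₀}(◊T) = Val(s₀) if and only if Pr'_{σ,s₀}(◊T) = 1. -/

import Mathlib

open scoped ENNReal NNReal Classical
open Filter

universe u v

variable {S : Type u} {A : Type v}

/-- A finite MDP: `P s a = some d` means action `a` is legal at `s` and `d` is a
probability distribution on `S`; every state has at least one legal action. -/
structure MDP (S : Type u) (A : Type v) [Fintype S] [Fintype A] where
  P : S → A → Option (S → NNReal)
  sum_one : ∀ s a d, P s a = some d → (∑ s', d s') = 1
  exists_legal : ∀ s, ∃ a, (P s a).isSome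

/-- Last state of an alternating path starting at `s` with steps `steps`. -/
def lastState : S → List (A × S) → S
  | s, [] => s
  | _, (_, s') :: rest => lastState s' rest

/-- A finite path: a start state together with a list of (action, next-state) steps. -/
structure FPath (S : Type u) (A : Type v) where
  start : S
  steps : List (A × S)

namespace FPath

def last (ρ : FPath S A) : S := lastState ρ.start ρ.steps

def states (ρ : FPath S A) : List S := ρ.start :: ρ.steps.map Prod.snd

def length (ρ : FPath S A) : ℕ := ρ.steps.length

end FPath

/-- A (raw) strategy: maps each finite path (start state + steps) to a distribution on actions. -/
def Strat (S : Type u) (A : Type v) := S → List (A × S) → A → ℝ≥0∞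

/-- Shifted strategy `σ_ρ` for `ρ = (s₀, pre)`: `σ_ρ(ρ') = σ(ρ·ρ')`. -/
def shiftStrat (σ : Strat S A) (s₀ : S) (pre : List (A × S)) : Strat S A :=
  fun _ steps a => σ s₀ (pre ++ steps) a

/-- Generic cylinder weight (product of strategy- and transition-probabilities along the
steps), relative to a transition kernel `p`. The accumulator `pre` is the path-prefix so far. -/
noncomputable def wtP (p : S → A → S → ℝ≥0∞) (σ : Strat S A) (s₀ : S) :
    List (A × S) → List (A × S) → ℝ≥0∞
  | _, [] => 1
  | pre, (a, s') :: rest =>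
      σ s₀ pre a * p (lastState s₀ pre) a s' * wtP p σ s₀ (pre ++ [(a, s')]) rest
  termination_by pre l => l.length

/-- Generic cylinder probability of path `ρ` from start state `s`, kernel `p`. -/
noncomputable def cylProbP (p : S → A → S → ℝ≥0∞) (σ : Strat S A) (s : S) (ρ : FPath S A) :
    ℝ≥0∞ :=
  if ρ.start = s then wtP p σ ρ.start [] ρ.steps else 0

namespace MDP

variable [Fintype S] [Fintype A]

def legal (M : MDP S A) (s : S) (a : A) : Prop := (M.P s a).isSome

noncomputable def prob (M : MDP S A) (s : S) (a : A) (s' : S) : ℝ≥0∞ :=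
  (M.P s a).elim 0 fun d => (d s' : ℝ≥0∞)

/-- `ρ` is a finite path of `M` from `s`: every action legal, every transition of
positive probability. -/
def IsPathFrom (M : MDP S A) : S → List (A × S) → Prop
  | _, [] => True
  | s, (a, s') :: rest => M.legal s a ∧ 0 < M.prob s a s' ∧ M.IsPathFrom s' rest

def IsPath (M : MDP S A) (ρ : FPath S A) : Prop := M.IsPathFrom ρ.start ρ.steps

/-- `σ` is a strategy: at every finite path it gives a probability distribution on actions
supported on actions legal at the last state. -/
def IsStrategy (M : MDP S A) (σ : Strat S A) : Prop :=
  ∀ s steps, M.IsPathFrom s steps →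
    (∑ a, σ s steps a) = 1 ∧ ∀ a, 0 < σ s steps a → M.legal (lastState s steps) a

/-- Cylinder probability `P_{σ,s}(ρ)` in `M`. -/
noncomputable def cylProb (M : MDP S A) (σ : Strat S A) (s : S) (ρ : FPath S A) : ℝ≥0∞ :=
  cylProbP M.prob σ s ρ

/-- `T` is a set of sink states: each `t ∈ T` has exactly one legal action, leading back
to `t` with probability `1`. -/
def SinkSet (M : MDP S A) (T : Set S) : Prop :=
  ∀ t ∈ T, (∃! a, M.legal t a) ∧ ∀ a, M.legal t a → M.prob t a t = 1

/-- Generic pruned finite-path predicate: all states have positive value `v` and every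
step uses an `opt` state-action pair with positive transition probability in `M`. -/
def IsPathFromPruned (M : MDP S A) (v : S → ℝ≥0∞) (opt : S → A → Prop) :
    S → List (A × S) → Prop
  | s, [] => 0 < v s
  | s, (a, s') :: rest =>
      0 < v s ∧ opt s a ∧ 0 < M.prob s a s' ∧ M.IsPathFromPruned v opt s' rest

/-! ### Reachability -/

/-- `ρ` is a `T`-hitting path: its last state lies in `T` and no other state does. -/
def HitsFirst (T : Set S) (ρ : FPath S A) : Prop :=
  ρ.last ∈ T ∧ ∀ x ∈ ρ.states.dropLast, x ∉ T

/-- `Pr_{σ,s}(◊T)`: sum over `T`-hitting paths starting at `s` of their cylinder probabilities. -/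
noncomputable def prReach (M : MDP S A) (σ : Strat S A) (s : S) (T : Set S) : ℝ≥0∞ :=
  ∑' ρ : {ρ : FPath S A // M.IsPath ρ ∧ HitsFirst T ρ ∧ ρ.start = s}, M.cylProb σ s ρ.1

/-- `Val(s)` for reachability: supremum over strategies of `Pr_{σ,s}(◊T)`. -/
noncomputable def reachVal (M : MDP S A) (T : Set S) (s : S) : ℝ≥0∞ :=
  ⨆ (σ : Strat S A) (_ : M.IsStrategy σ), M.prReach σ s T

/-- `(s,a) ∈ Opt` for reachability. -/
def OptR (M : MDP S A) (T : Set S) (s : S) (a : A) : Prop :=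
  M.legal s a ∧ M.reachVal T s = ∑ s', M.prob s a s' * M.reachVal T s'

/-- `σ ∈ Σ^Opt` for reachability. -/
def SigmaOptR (M : MDP S A) (T : Set S) (σ : Strat S A) : Prop :=
  ∀ s steps, M.IsPathFrom s steps → ∀ a, 0 < σ s steps a → M.OptR T (lastState s steps) a

/-- Transition probabilities of the pruned MDP `M'` for reachability. -/
noncomputable def probR' (M : MDP S A) (T : Set S) (s : S) (a : A) (s' : S) : ℝ≥0∞ :=
  if M.OptR T s a ∧ 0 < M.reachVal T s then
    M.prob s a s' * M.reachVal T s' / M.reachVal T s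
  else 0

/-- `ρ` is a finite path of the pruned MDP `M'` (reachability version). -/
def IsPathR' (M : MDP S A) (T : Set S) (ρ : FPath S A) : Prop :=
  M.IsPathFromPruned (M.reachVal T) (M.OptR T) ρ.start ρ.steps

/-- Cylinder probability `P'_{σ,s}(ρ)` in the pruned MDP `M'` (reachability version). -/
noncomputable def cylProbR' (M : MDP S A) (T : Set S) (σ : Strat S A) (s : S) (ρ : FPath S A) :
    ℝ≥0∞ :=
  cylProbP (M.probR' T) σ s ρ

/-- `Pr'_{σ,s}(◊T)` in the pruned MDP `M'`. -/
noncomputable def prReach' (M : MDP S A) (σ : Strat S A) (s : S) (T : Set S) : ℝ≥0∞ :=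
  ∑' ρ : {ρ : FPath S A // M.IsPathR' T ρ ∧ HitsFirst T ρ ∧ ρ.start = s},
    M.cylProbR' T σ s ρ.1

/-- Probability of hitting `T` for the first time in exactly `r` steps, in `M`. -/
noncomputable def hitLenProb (M : MDP S A) (σ : Strat S A) (s : S) (T : Set S) (r : ℕ) :
    ℝ≥0∞ :=
  ∑' ρ : {ρ : FPath S A // M.IsPath ρ ∧ HitsFirst T ρ ∧ ρ.start = s ∧ ρ.length = r},
    M.cylProb σ s ρ.1

/-- Probability of hitting `T` for the first time in exactly `r` steps, in `M'`. -/
noncomputable def hitLenProb' (M : MDP S A) (σ : Strat S A) (s : S) (T : Set S) (r : ℕ) :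
    ℝ≥0∞ :=
  ∑' ρ : {ρ : FPath S A // M.IsPathR' T ρ ∧ HitsFirst T ρ ∧ ρ.start = s ∧ ρ.length = r},
    M.cylProbR' T σ s ρ.1

/-- Conditional expected length to target `E_{σ,s}(len_T | ◊T)`. -/
noncomputable def condExpLen (M : MDP S A) (σ : Strat S A) (s : S) (T : Set S) : ℝ≥0∞ :=
  ∑' r : ℕ, (r : ℝ≥0∞) * M.hitLenProb σ s T r / M.prReach σ s T

/-- Expected length to target in `M'`, `E'_{σ,s}(len_T)`; `∞` unless `Pr'_{σ,s}(◊T) = 1`. -/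
noncomputable def expLen' (M : MDP S A) (σ : Strat S A) (s : S) (T : Set S) : ℝ≥0∞ :=
  if M.prReach' σ s T = 1 then ∑' r : ℕ, (r : ℝ≥0∞) * M.hitLenProb' σ s T r else ⊤

/-! ### Safety -/

/-- `Safe_n(σ,s)`: probability of the paths of length `n` from `s` avoiding `Bad`. -/
noncomputable def safeN (M : MDP S A) (σ : Strat S A) (s : S) (Bad : Set S) (n : ℕ) : ℝ≥0∞ :=
  ∑' ρ : {ρ : FPath S A //
      M.IsPath ρ ∧ ρ.start = s ∧ ρ.length = n ∧ ∀ x ∈ ρ.states, x ∉ Bad},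
    M.cylProb σ s ρ.1

/-- `Pr_{σ,s}(□¬Bad) := ⨅ n, Safe_n(σ,s)`. -/
noncomputable def prSafe (M : MDP S A) (σ : Strat S A) (s : S) (Bad : Set S) : ℝ≥0∞ :=
  ⨅ n : ℕ, M.safeN σ s Bad n

/-- `Val(s)` for safety: supremum over strategies of `Pr_{σ,s}(□¬Bad)`. -/
noncomputable def safeVal (M : MDP S A) (Bad : Set S) (s : S) : ℝ≥0∞ :=
  ⨆ (σ : Strat S A) (_ : M.IsStrategy σ), M.prSafe σ s Bad

/-- `(s,a) ∈ Opt` for safety. -/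
def OptS (M : MDP S A) (Bad : Set S) (s : S) (a : A) : Prop :=
  M.legal s a ∧ M.safeVal Bad s = ∑ s', M.prob s a s' * M.safeVal Bad s'

/-- `σ ∈ Σ^Opt` for safety. -/
def SigmaOptS (M : MDP S A) (Bad : Set S) (σ : Strat S A) : Prop :=
  ∀ s steps, M.IsPathFrom s steps → ∀ a, 0 < σ s steps a → M.OptS Bad (lastState s steps) a

/-- `UPreⁱ(Bad)`. -/
def UPre (M : MDP S A) (Bad : Set S) : ℕ → Set S
  | 0 => Bad
  | i + 1 => {s | ∀ a, M.legal s a → ∃ s' ∈ M.UPre Bad i, 0 < M.prob s a s'}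

/-- `Good := S \ UPre*(Bad)`. -/
def GoodSet (M : MDP S A) (Bad : Set S) : Set S := (⋃ i, M.UPre Bad i)ᶜ

/-- `V := S \ (Good ∪ Bad)`. -/
def VSet (M : MDP S A) (Bad : Set S) : Set S := (M.GoodSet Bad ∪ Bad)ᶜ

/-- `Pr_{σ,s}(GoodCyl(ρ)) := P_{σ,s}(ρ) · Pr_{σ_ρ, last(ρ)}(□¬Bad)`. -/
noncomputable def goodCyl (M : MDP S A) (σ : Strat S A) (s : S) (Bad : Set S) (ρ : FPath S A) :
    ℝ≥0∞ :=
  M.cylProb σ s ρ * M.prSafe (shiftStrat σ ρ.start ρ.steps) ρ.last Bad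

/-- Transition probabilities of the pruned MDP `M'` for safety. -/
noncomputable def probS' (M : MDP S A) (Bad : Set S) (s : S) (a : A) (s' : S) : ℝ≥0∞ :=
  if M.OptS Bad s a ∧ 0 < M.safeVal Bad s then
    M.prob s a s' * M.safeVal Bad s' / M.safeVal Bad s
  else 0

/-- `ρ` is a finite path of the pruned MDP `M'` (safety version). -/
def IsPathS' (M : MDP S A) (Bad : Set S) (ρ : FPath S A) : Prop :=
  M.IsPathFromPruned (M.safeVal Bad) (M.OptS Bad) ρ.start ρ.steps

/-- Cylinder probability `P'_{σ,s}(ρ)` in the pruned MDP `M'` (safety version). -/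
noncomputable def cylProbS' (M : MDP S A) (Bad : Set S) (σ : Strat S A) (s : S)
    (ρ : FPath S A) : ℝ≥0∞ :=
  cylProbP (M.probS' Bad) σ s ρ

end MDP

/-- `Reward_n(ρ) = ∑_{i<n} R(sᵢ, aᵢ)` for `ρ` starting at `s` with steps `steps`. -/
def rewardOf (R : S → A → ℝ) : S → List (A × S) → ℝ
  | _, [] => 0
  | s, (a, s') :: rest => R s a + rewardOf R s' rest

namespace MDP

variable [Fintype S] [Fintype A]

/-- `E'_{σ,s}(Reward_n)` in the pruned MDP `M'` (safety version). -/
noncomputable def expRewN' (M : MDP S A) (Bad : Set S) (R : S → A → ℝ) (σ : Strat S A)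
    (s : S) (n : ℕ) : ℝ :=
  ∑' ρ : {ρ : FPath S A // M.IsPathS' Bad ρ ∧ ρ.start = s ∧ ρ.length = n},
    (M.cylProbS' Bad σ s ρ.1).toReal * rewardOf R ρ.1.start ρ.1.steps

/-- `E'_{σ,s}(MP) := liminf_n (1/n)·E'_{σ,s}(Reward_n)`. -/
noncomputable def mp' (M : MDP S A) (Bad : Set S) (R : S → A → ℝ) (σ : Strat S A) (s : S) :
    ℝ :=
  Filter.atTop.liminf fun n : ℕ => M.expRewN' Bad R σ s n / n

/-- `E_{σ,s}(Reward_n | □¬Bad)`. -/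
noncomputable def condExpRewN (M : MDP S A) (Bad : Set S) (R : S → A → ℝ) (σ : Strat S A)
    (s : S) (n : ℕ) : ℝ :=
  (∑' ρ : {ρ : FPath S A // M.IsPath ρ ∧ ρ.start = s ∧ ρ.length = n},
    (M.goodCyl σ s Bad ρ.1).toReal * rewardOf R ρ.1.start ρ.1.steps) /
  (M.prSafe σ s Bad).toReal

/-- `E_{σ,s}(MP | □¬Bad) := liminf_n (1/n)·E_{σ,s}(Reward_n | □¬Bad)`. -/
noncomputable def condMP (M : MDP S A) (Bad : Set S) (R : S → A → ℝ) (σ : Strat S A)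
    (s : S) : ℝ :=
  Filter.atTop.liminf fun n : ℕ => M.condExpRewN Bad R σ s n / n

end MDP


/-! ### Auxiliary development for stmt4 -/

section Aux

set_option linter.unusedSectionVars false
set_option linter.unusedVariables false

variable {S : Type u} {A : Type v} [Fintype S] [Fintype A]

theorem lastState_append (s : S) (u v : List (A × S)) :
    lastState s (u ++ v) = lastState (lastState s u) v := by
  induction u generalizing s with
  | nil => rfl
  | cons x rest ih => exact ih x.2 -- lastState s ((a,b)::rest ++ v) = lastState b (rest++v)

theorem lastState_eq (s : S) (u : List (A × S)) (hne : u ≠ []) :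
    lastState s u = (u.getLast hne).2 := by
  induction u generalizing s with
  | nil => exact absurd rfl hne
  | cons x rest ih =>
    cases rest with
    | nil => rfl
    | cons y t => exact ih x.2 (by simp)

namespace MDP

theorem isPathFrom_append (M : MDP S A) {s : S} {u v : List (A × S)}
    (hu : M.IsPathFrom s u) (hv : M.IsPathFrom (lastState s u) v) :
    M.IsPathFrom s (u ++ v) := by
  induction u generalizing s with
  | nil => exact hv
  | cons x rest ih =>
    obtain ⟨h1, h2, h3⟩ := hu
    exact ⟨h1, h2, ih h3 hv⟩

end MDP

theorem wtP_nil (p : S → A → S → ℝ≥0∞) (σ : Strat S A) (s : S) (pre : List (A × S)) :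
    wtP p σ s pre [] = 1 := by
  simp [wtP]

theorem wtP_cons (p : S → A → S → ℝ≥0∞) (σ : Strat S A) (s : S) (pre : List (A × S))
    (a : A) (s' : S) (rest : List (A × S)) :
    wtP p σ s pre ((a, s') :: rest)
      = σ s pre a * p (lastState s pre) a s' * wtP p σ s (pre ++ [(a, s')]) rest := by
  simp [wtP]

theorem wtP_shift (p : S → A → S → ℝ≥0∞) (σ : Strat S A) (s : S) (pre0 : List (A × S)) :
    ∀ (rest pre : List (A × S)),
      wtP p σ s (pre0 ++ pre) rest
        = wtP p (fun _ st b => σ s (pre0 ++ st) b) (lastState s pre0) pre rest := by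
  intro rest
  induction rest with
  | nil => intro pre; rw [wtP_nil]; exact (wtP_nil _ _ _ _).symm
  | cons x rest ih =>
    intro pre
    obtain ⟨a, s'⟩ := x
    rw [wtP_cons, lastState_append, List.append_assoc, ih (pre ++ [(a, s')])]
    exact (wtP_cons p (fun _ st b => σ s (pre0 ++ st) b) (lastState s pre0) pre a s' rest).symm

end Aux

section Aux2

set_option linter.unusedSectionVars false
set_option linter.unusedVariables false

variable {S : Type u} {A : Type v} [Fintype S] [Fintype A]

/-- Point mass at `a₀`. -/
noncomputable def dirac (a₀ : A) : A → ℝ≥0∞ := fun a => if a = a₀ then 1 else 0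

theorem dirac_sum (a₀ : A) : (∑ a, dirac a₀ a) = 1 := by
  simp [dirac]

theorem dirac_pos {a₀ a : A} (h : 0 < dirac a₀ a) : a = a₀ := by
  by_contra hne
  simp [dirac, hne] at h

namespace MDP

theorem legal_choose (M : MDP S A) (s : S) : M.legal s (M.exists_legal s).choose :=
  (M.exists_legal s).choose_spec

/-- Default strategy: point mass at some legal action. -/
noncomputable def defStrat (M : MDP S A) : Strat S A :=
  fun s st => dirac (M.exists_legal (lastState s st)).choose

theorem defStrat_isStrategy (M : MDP S A) : M.IsStrategy (M.defStrat) := by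
  intro s steps _
  refine ⟨dirac_sum _, fun a ha => ?_⟩
  rw [dirac_pos ha]
  exact M.legal_choose _

/-- Strategy following a fixed path `steps` from `s`. -/
noncomputable def pathStrat (M : MDP S A) (s : S) (steps : List (A × S)) : Strat S A :=
  fun s' st =>
    ((steps.drop st.length).head?).elim (M.defStrat s' st)
      (fun p => if s' = s ∧ st = steps.take st.length then dirac p.1 else M.defStrat s' st)

theorem pathStrat_some (M : MDP S A) (s : S) (steps : List (A × S)) (s' : S)
    (st : List (A × S)) (a₀ : A) (t : S)
    (h : (steps.drop st.length).head? = some (a₀, t)) :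
    M.pathStrat s steps s' st
      = if s' = s ∧ st = steps.take st.length then dirac a₀ else M.defStrat s' st := by
  unfold pathStrat
  rw [h]
  rfl

theorem pathStrat_none (M : MDP S A) (s : S) (steps : List (A × S)) (s' : S)
    (st : List (A × S)) (h : (steps.drop st.length).head? = none) :
    M.pathStrat s steps s' st = M.defStrat s' st := by
  unfold pathStrat
  rw [h]
  rfl

theorem path_step (M : MDP S A) :
    ∀ (steps : List (A × S)) (s : S), M.IsPathFrom s steps →
      ∀ (n : ℕ) (a : A) (t : S) (rest : List (A × S)), steps.drop n = (a, t) :: rest →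
        M.legal (lastState s (steps.take n)) a ∧
          0 < M.prob (lastState s (steps.take n)) a t := by
  intro steps
  induction steps with
  | nil => intro s _ n a t rest h; simp at h
  | cons x steps' ih =>
    intro s hp n a t rest h
    obtain ⟨h1, h2, h3⟩ := hp
    cases n with
    | zero =>
      simp only [List.drop_zero] at h
      cases h
      exact ⟨h1, h2⟩
    | succ m =>
      simpa [List.take, lastState] using ih x.2 h3 m a t rest (by simpa using h)

theorem pathStrat_isStrategy (M : MDP S A) (s : S) (steps : List (A × S))
    (hp : M.IsPathFrom s steps) : M.IsStrategy (M.pathStrat s steps) := by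
  intro s' st hst
  rcases h : (steps.drop st.length).head? with _ | ⟨a₀, t⟩
  · rw [pathStrat_none M s steps s' st h]
    refine ⟨dirac_sum _, fun a ha => ?_⟩
    rw [dirac_pos ha]; exact M.legal_choose _
  · rw [pathStrat_some M s steps s' st a₀ t h]
    by_cases hc : s' = s ∧ st = steps.take st.length
    · rw [if_pos hc]
      refine ⟨dirac_sum _, fun a ha => ?_⟩
      obtain ⟨rest', hdrop⟩ : ∃ rest', steps.drop st.length = (a₀, t) :: rest' := by
        cases hd : steps.drop st.length with
        | nil => rw [hd] at h; simp at h
        | cons y l => rw [hd] at h; simp at h; exact ⟨l, by rw [h]⟩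
      have hl := (M.path_step steps s hp st.length a₀ t rest' hdrop).1
      rw [dirac_pos ha, hc.1, hc.2]
      exact hl
    · rw [if_neg hc]
      refine ⟨dirac_sum _, fun a ha => ?_⟩
      rw [dirac_pos ha]; exact M.legal_choose _

theorem wtP_pathStrat_pos (M : MDP S A) (s : S) (steps : List (A × S))
    (hp : M.IsPathFrom s steps) :
    ∀ (rest pre : List (A × S)), pre ++ rest = steps →
      0 < wtP M.prob (M.pathStrat s steps) s pre rest := by
  intro rest
  induction rest with
  | nil => intro pre _; rw [wtP_nil]; exact one_pos
  | cons x rest' ih =>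
    intro pre hps
    obtain ⟨a, s'⟩ := x
    rw [wtP_cons]
    have hdrop : steps.drop pre.length = (a, s') :: rest' := by
      rw [← hps]; simp
    have htake : steps.take pre.length = pre := by
      rw [← hps]; simp
    have hσ : M.pathStrat s steps s pre a = 1 := by
      rw [pathStrat_some M s steps s pre a s' (by rw [hdrop]; rfl),
        if_pos ⟨rfl, htake.symm⟩]
      simp [dirac]
    have hprob : 0 < M.prob (lastState s pre) a s' := by
      have := (M.path_step steps s hp pre.length a s' rest' hdrop).2
      rwa [htake] at this
    have hrec : 0 < wtP M.prob (M.pathStrat s steps) s (pre ++ [(a, s')]) rest' :=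
      ih (pre ++ [(a, s')]) (by rw [← hps]; simp)
    rw [hσ, one_mul]
    exact ENNReal.mul_pos hprob.ne' hrec.ne'

end MDP

end Aux2

section Aux3

set_option linter.unusedSectionVars false
set_option linter.unusedVariables false

variable {S : Type u} {A : Type v} [Fintype S] [Fintype A]

namespace MDP

theorem prReach_le_reachVal (M : MDP S A) {σ : Strat S A} (hσ : M.IsStrategy σ)
    (s : S) (T : Set S) : M.prReach σ s T ≤ M.reachVal T s :=
  le_iSup₂_of_le σ hσ le_rfl

theorem steps_nil_of_hitsFirst {T : Set S} {ρ : FPath S A} (hh : HitsFirst T ρ)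
    (hs : ρ.start ∈ T) : ρ.steps = [] := by
  cases hst : ρ.steps with
  | nil => rfl
  | cons x l =>
    exfalso
    apply hh.2 ρ.start _ hs
    unfold FPath.states
    rw [hst]
    simp

theorem reachVal_pos (M : MDP S A) (T : Set S) {s : S} {steps : List (A × S)}
    (hp : M.IsPathFrom s steps) (hh : HitsFirst T ⟨s, steps⟩) :
    0 < M.reachVal T s := by
  have hpos : 0 < M.cylProb (M.pathStrat s steps) s ⟨s, steps⟩ := by
    unfold cylProb cylProbP
    rw [if_pos rfl]
    exact M.wtP_pathStrat_pos s steps hp steps [] rfl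
  have hle : M.cylProb (M.pathStrat s steps) s ⟨s, steps⟩
      ≤ M.prReach (M.pathStrat s steps) s T :=
    ENNReal.le_tsum
      (⟨⟨s, steps⟩, hp, hh, rfl⟩ :
        {ρ : FPath S A // M.IsPath ρ ∧ HitsFirst T ρ ∧ ρ.start = s})
  exact hpos.trans_le
    (hle.trans (M.prReach_le_reachVal (M.pathStrat_isStrategy s steps hp) s T))

theorem prReach_mem (M : MDP S A) {T : Set S} {t : S} (ht : t ∈ T) (σ : Strat S A) :
    M.prReach σ t T = 1 := by
  unfold prReach
  have he : M.IsPath (⟨t, []⟩ : FPath S A) ∧ HitsFirst T (⟨t, []⟩ : FPath S A) ∧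
      FPath.start (⟨t, []⟩ : FPath S A) = t := by
    refine ⟨trivial, ⟨ht, ?_⟩, rfl⟩
    intro x hx
    simp [FPath.states] at hx
  rw [tsum_eq_single (⟨⟨t, []⟩, he⟩ :
      {ρ : FPath S A // M.IsPath ρ ∧ HitsFirst T ρ ∧ ρ.start = t}) ?_]
  · unfold cylProb cylProbP
    rw [if_pos rfl, wtP_nil]
  · intro b hb
    exfalso
    apply hb
    have hnil : b.1.steps = [] :=
      steps_nil_of_hitsFirst b.2.2.1 (by rw [b.2.2.2]; exact ht)
    apply Subtype.ext
    have hstart := b.2.2.2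
    cases hbb : b.1 with
    | mk st sp =>
      rw [hbb] at hnil hstart
      simp at hnil hstart
      rw [hnil, hstart]

theorem reachVal_mem (M : MDP S A) {T : Set S} {t : S} (ht : t ∈ T) :
    M.reachVal T t = 1 := by
  apply le_antisymm
  · exact iSup₂_le fun σ hσ => le_of_eq (M.prReach_mem ht σ)
  · exact le_iSup₂_of_le M.defStrat M.defStrat_isStrategy (le_of_eq (M.prReach_mem ht M.defStrat).symm)

end MDP

end Aux3

section Aux4

set_option linter.unusedSectionVars false
set_option linter.unusedVariables false
set_option maxHeartbeats 1000000

variable {S : Type u} {A : Type v} [Fintype S] [Fintype A]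

/-- The obvious equivalence between `S × List (A × S)` and `FPath S A`. -/
def fpathEquiv : (S × List (A × S)) ≃ FPath S A where
  toFun p := ⟨p.1, p.2⟩
  invFun ρ := (ρ.start, ρ.steps)
  left_inv p := rfl
  right_inv ρ := rfl

theorem tsum_list_cons {X : Type v} (g : List X → ℝ≥0∞) (h0 : g [] = 0) :
    ∑' l : List X, g l = ∑' x : X × List X, g (x.1 :: x.2) := by
  refine tsum_eq_tsum_of_ne_zero_bij (fun x => x.1.1 :: x.1.2) ?_ ?_ ?_
  · intro x y hxy
    apply Subtype.ext
    injection hxy with h1 h2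
    exact Prod.ext h1 h2
  · intro l hl
    cases l with
    | nil => exact absurd h0 hl
    | cons x l' => exact ⟨⟨(x, l'), hl⟩, rfl⟩
  · intro x; rfl

namespace MDP

theorem prob_sum_le_one (M : MDP S A) (s : S) (a : A) : (∑ s', M.prob s a s') ≤ 1 := by
  unfold prob
  cases h : M.P s a with
  | none => simp
  | some d =>
    simp only [Option.elim]
    rw [← ENNReal.coe_finset_sum, M.sum_one s a d h]
    exact le_rfl

theorem prob_sum_eq_one (M : MDP S A) {s : S} {a : A} (h : M.legal s a) :
    (∑ s', M.prob s a s') = 1 := by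
  unfold prob
  rcases Option.isSome_iff_exists.mp h with ⟨d, hd⟩
  rw [hd]
  simp only [Option.elim]
  rw [← ENNReal.coe_finset_sum, M.sum_one s a d hd]
  rfl

/-- `σ` behaves as a strategy on paths from `s`. -/
def IsStrategyAt (M : MDP S A) (σ : Strat S A) (s : S) : Prop :=
  ∀ steps, M.IsPathFrom s steps →
    (∑ a, σ s steps a) = 1 ∧ ∀ a, 0 < σ s steps a → M.legal (lastState s steps) a

theorem IsStrategy.isStrategyAt {M : MDP S A} {σ : Strat S A} (h : M.IsStrategy σ) (s : S) :
    M.IsStrategyAt σ s := fun steps hp => h s steps hp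

/-- Indicator version of the first-hit probabilities, with a length bound. -/
noncomputable def hitInd (M : MDP S A) (T : Set S) (σ : Strat S A) (s : S) (n : ℕ)
    (ρ : FPath S A) : ℝ≥0∞ :=
  if M.IsPath ρ ∧ HitsFirst T ρ ∧ ρ.start = s ∧ ρ.length ≤ n then M.cylProb σ s ρ else 0

theorem hitsFirst_cons_iff {T : Set S} {s : S} (hsT : s ∉ T) (a : A) (s' : S)
    (rest : List (A × S)) :
    HitsFirst T (⟨s, (a, s') :: rest⟩ : FPath S A)
      ↔ HitsFirst T (⟨s', rest⟩ : FPath S A) := by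
  have hdl : (FPath.states (⟨s, (a, s') :: rest⟩ : FPath S A)).dropLast
      = s :: (FPath.states (⟨s', rest⟩ : FPath S A)).dropLast := by
    simp [FPath.states, List.dropLast_cons_of_ne_nil]
  constructor
  · rintro ⟨hl, hd⟩
    exact ⟨hl, fun x hx => hd x (by rw [hdl]; exact List.mem_cons_of_mem _ hx)⟩
  · rintro ⟨hl, hd⟩
    refine ⟨hl, fun x hx => ?_⟩
    rw [hdl] at hx
    rcases List.mem_cons.mp hx with h | h
    · rw [h]; exact hsT
    · exact hd x h

theorem hitInd_cons (M : MDP S A) (T : Set S) (σ : Strat S A) {s : S} (hsT : s ∉ T)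
    (hlegal : ∀ a, σ s [] a ≠ 0 → M.legal s a)
    (n : ℕ) (a : A) (s' : S) (rest : List (A × S)) :
    M.hitInd T σ s (n + 1) ⟨s, (a, s') :: rest⟩
      = σ s [] a * M.prob s a s'
          * M.hitInd T (fun _ st b => σ s ((a, s') :: st) b) s' n ⟨s', rest⟩ := by
  unfold hitInd
  by_cases hσa : σ s [] a = 0
  · rw [hσa, zero_mul, zero_mul]
    split_ifs with h
    · unfold cylProb cylProbP
      rw [if_pos rfl]
      show wtP M.prob σ s [] ((a, s') :: rest) = 0
      rw [wtP_cons, hσa]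
      simp
    · rfl
  by_cases hpr : M.prob s a s' = 0
  · rw [hpr, mul_zero, zero_mul]
    split_ifs with h
    · unfold cylProb cylProbP
      rw [if_pos rfl]
      show wtP M.prob σ s [] ((a, s') :: rest) = 0
      rw [wtP_cons]
      show σ s [] a * M.prob s a s' * _ = 0
      rw [hpr]
      simp
    · rfl
  · have hleg' : M.legal s a := hlegal a hσa
    have hprp : 0 < M.prob s a s' := pos_iff_ne_zero.mpr hpr
    have hiff : (M.IsPath (⟨s, (a, s') :: rest⟩ : FPath S A)
          ∧ HitsFirst T (⟨s, (a, s') :: rest⟩ : FPath S A)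
          ∧ FPath.start (⟨s, (a, s') :: rest⟩ : FPath S A) = s
          ∧ FPath.length (⟨s, (a, s') :: rest⟩ : FPath S A) ≤ n + 1)
        ↔ (M.IsPath (⟨s', rest⟩ : FPath S A)
          ∧ HitsFirst T (⟨s', rest⟩ : FPath S A)
          ∧ FPath.start (⟨s', rest⟩ : FPath S A) = s'
          ∧ FPath.length (⟨s', rest⟩ : FPath S A) ≤ n) := by
      constructor
      · rintro ⟨hp, hh, -, hlen⟩
        exact ⟨hp.2.2, (hitsFirst_cons_iff hsT a s' rest).mp hh, rfl,
          Nat.succ_le_succ_iff.mp hlen⟩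
      · rintro ⟨hp, hh, -, hlen⟩
        exact ⟨⟨hleg', hprp, hp⟩, (hitsFirst_cons_iff hsT a s' rest).mpr hh, rfl,
          Nat.succ_le_succ hlen⟩
    split_ifs with h1 h2
    · unfold cylProb cylProbP
      rw [if_pos rfl, if_pos rfl]
      show wtP M.prob σ s [] ((a, s') :: rest) = _
      rw [wtP_cons]
      exact congrArg (fun w => σ s [] a * M.prob s a s' * w)
        (wtP_shift M.prob σ s [(a, s')] rest [])
    · exact absurd (hiff.mp h1) h2
    · exact absurd (hiff.mpr (by assumption)) h1
    · simp

theorem tsum_hitInd_le_one (M : MDP S A) (T : Set S) :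
    ∀ (n : ℕ) (σ : Strat S A) (s : S), M.IsStrategyAt σ s →
      (∑' ρ : FPath S A, M.hitInd T σ s n ρ) ≤ 1 := by
  have memT : ∀ (n : ℕ) (σ : Strat S A) (s : S), s ∈ T →
      (∑' ρ : FPath S A, M.hitInd T σ s n ρ) ≤ 1 := by
    intro n σ s hs
    rw [tsum_eq_single (⟨s, []⟩ : FPath S A) ?_]
    · unfold hitInd
      split_ifs with h
      · unfold cylProb cylProbP
        rw [if_pos rfl, wtP_nil]
      · exact zero_le_one
    · intro ρ hρ
      unfold hitInd
      split_ifs with h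
      · exfalso
        apply hρ
        have hnil : ρ.steps = [] :=
          steps_nil_of_hitsFirst h.2.1 (by rw [h.2.2.1]; exact hs)
        have hstart := h.2.2.1
        cases ρ with
        | mk st sp =>
          have h1 : st = s := hstart
          have h2 : sp = [] := hnil
          rw [h1, h2]
      · rfl
  intro n
  induction n with
  | zero =>
    intro σ s hσ
    by_cases hs : s ∈ T
    · exact memT 0 σ s hs
    · have hzero : ∀ ρ : FPath S A, M.hitInd T σ s 0 ρ = 0 := by
        intro ρ
        unfold hitInd
        split_ifs with h
        · exfalso
          obtain ⟨hp, hh, hst, hlen⟩ := h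
          have hnil : ρ.steps = [] := List.length_eq_zero_iff.mp (Nat.le_zero.mp hlen)
          apply hs
          have : ρ.last = ρ.start := by unfold FPath.last; rw [hnil]; rfl
          rw [← hst, ← this]
          exact hh.1
        · rfl
      rw [tsum_congr hzero, tsum_zero]
      exact zero_le_one
  | succ n ih =>
    intro σ s hσ
    by_cases hs : s ∈ T
    · exact memT (n + 1) σ s hs
    · have hσnil := hσ [] trivial
      have hlegal : ∀ a, σ s [] a ≠ 0 → M.legal s a := fun a ha =>
        hσnil.2 a (pos_iff_ne_zero.mpr ha)
      calc (∑' ρ : FPath S A, M.hitInd T σ s (n + 1) ρ)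
          = ∑' p : S × List (A × S), M.hitInd T σ s (n + 1) (fpathEquiv p) :=
            (fpathEquiv.tsum_eq _).symm
        _ = ∑' st : S, ∑' l : List (A × S), M.hitInd T σ s (n + 1) ⟨st, l⟩ :=
            ENNReal.tsum_prod'
        _ = ∑ st : S, ∑' l : List (A × S), M.hitInd T σ s (n + 1) ⟨st, l⟩ :=
            tsum_fintype _
        _ = ∑' l : List (A × S), M.hitInd T σ s (n + 1) ⟨s, l⟩ := by
            refine Finset.sum_eq_single_of_mem s (Finset.mem_univ s) fun t _ hts => ?_
            refine ENNReal.tsum_eq_zero.mpr fun l => ?_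
            unfold hitInd
            split_ifs with h
            · exact absurd h.2.2.1 hts
            · rfl
        _ = ∑' x : (A × S) × List (A × S), M.hitInd T σ s (n + 1) ⟨s, x.1 :: x.2⟩ := by
            refine tsum_list_cons _ ?_
            unfold hitInd
            split_ifs with h
            · exfalso
              apply hs
              exact h.2.1.1
            · rfl
        _ = ∑' y : A × S, ∑' l : List (A × S), M.hitInd T σ s (n + 1) ⟨s, y :: l⟩ :=
            ENNReal.tsum_prod'
        _ = ∑ y : A × S, ∑' l : List (A × S), M.hitInd T σ s (n + 1) ⟨s, y :: l⟩ :=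
            tsum_fintype _
        _ ≤ ∑ y : A × S, σ s [] y.1 * M.prob s y.1 y.2 := by
            refine Finset.sum_le_sum fun y _ => ?_
            obtain ⟨a, s'⟩ := y
            have hrw : ∀ l, M.hitInd T σ s (n + 1) ⟨s, (a, s') :: l⟩
                = σ s [] a * M.prob s a s'
                    * M.hitInd T (fun _ st b => σ s ((a, s') :: st) b) s' n ⟨s', l⟩ :=
              fun l => M.hitInd_cons T σ hs hlegal n a s' l
            rw [tsum_congr hrw, ENNReal.tsum_mul_left]
            by_cases hσa : σ s [] a = 0
            · rw [hσa, zero_mul, zero_mul]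
            by_cases hpr : M.prob s a s' = 0
            · rw [hpr, mul_zero, zero_mul]
            · have hσ' : M.IsStrategyAt (fun _ st b => σ s ((a, s') :: st) b) s' := by
                intro steps hsteps
                have hpath : M.IsPathFrom s ((a, s') :: steps) :=
                  ⟨hlegal a hσa, pos_iff_ne_zero.mpr hpr, hsteps⟩
                exact hσ ((a, s') :: steps) hpath
              have hinj : Function.Injective (fun l => (⟨s', l⟩ : FPath S A)) := by
                intro l1 l2 h
                injection h
              have hinner :
                  (∑' l : List (A × S),
                    M.hitInd T (fun _ st b => σ s ((a, s') :: st) b) s' n ⟨s', l⟩) ≤ 1 :=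
                le_trans (ENNReal.tsum_comp_le_tsum_of_injective hinj _) (ih _ s' hσ')
              calc σ s [] a * M.prob s a s'
                    * ∑' l : List (A × S),
                        M.hitInd T (fun _ st b => σ s ((a, s') :: st) b) s' n ⟨s', l⟩
                  ≤ σ s [] a * M.prob s a s' * 1 := mul_le_mul_right hinner _
                _ = σ s [] a * M.prob s a s' := mul_one _
        _ = ∑ a : A, σ s [] a * ∑ s' : S, M.prob s a s' := by
            rw [Fintype.sum_prod_type]
            exact Finset.sum_congr rfl fun a _ => by rw [Finset.mul_sum]
        _ ≤ ∑ a : A, σ s [] a * 1 :=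
            Finset.sum_le_sum fun a _ =>
              mul_le_mul_right (M.prob_sum_le_one s a) _
        _ = 1 := by
            simp only [mul_one]
            exact hσnil.1

end MDP

end Aux4

section Aux5

set_option linter.unusedSectionVars false
set_option linter.unusedVariables false
set_option maxHeartbeats 1000000

variable {S : Type u} {A : Type v} [Fintype S] [Fintype A]

namespace MDP

theorem prReach_le_one (M : MDP S A) (T : Set S) (σ : Strat S A) (s : S)
    (hσ : M.IsStrategyAt σ s) : M.prReach σ s T ≤ 1 := by
  unfold prReach
  rw [ENNReal.tsum_eq_iSup_sum]
  refine iSup_le fun F => ?_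
  set n := F.sup (fun ρ => ρ.1.length) with hn
  have hb : ∀ ρ ∈ F, M.cylProb σ s ρ.1 = M.hitInd T σ s n ρ.1 := by
    intro ρ hρ
    unfold hitInd
    rw [if_pos ⟨ρ.2.1, ρ.2.2.1, ρ.2.2.2, Finset.le_sup (f := fun ρ => ρ.1.length) hρ⟩]
  rw [Finset.sum_congr rfl hb]
  calc (∑ ρ ∈ F, M.hitInd T σ s n ρ.1)
      ≤ ∑' ρ' : {ρ : FPath S A // M.IsPath ρ ∧ HitsFirst T ρ ∧ ρ.start = s},
          M.hitInd T σ s n ρ'.1 := ENNReal.sum_le_tsum F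
    _ ≤ ∑' ρ : FPath S A, M.hitInd T σ s n ρ :=
        ENNReal.tsum_comp_le_tsum_of_injective Subtype.val_injective _
    _ ≤ 1 := M.tsum_hitInd_le_one T n σ s hσ

theorem reachVal_le_one (M : MDP S A) (T : Set S) (s : S) : M.reachVal T s ≤ 1 :=
  iSup₂_le fun σ hσ => M.prReach_le_one T σ s (hσ.isStrategyAt s)

theorem isPathFromPruned_head (M : MDP S A) {v : S → ℝ≥0∞} {opt : S → A → Prop}
    {s : S} {steps : List (A × S)} (h : M.IsPathFromPruned v opt s steps) : 0 < v s := by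
  cases steps with
  | nil => exact h
  | cons x l => exact h.1

theorem isPathFrom_of_pruned (M : MDP S A) (T : Set S) :
    ∀ (steps : List (A × S)) (s : S),
      M.IsPathFromPruned (M.reachVal T) (M.OptR T) s steps → M.IsPathFrom s steps := by
  intro steps
  induction steps with
  | nil => intro s _; trivial
  | cons x rest ih =>
    intro s h
    exact ⟨h.2.1.1, h.2.2.1, ih x.2 h.2.2.2⟩

theorem wtP_pruned (M : MDP S A) (T : Set S) (σ : Strat S A) (s : S) :
    ∀ (steps pre : List (A × S)),
      M.IsPathFromPruned (M.reachVal T) (M.OptR T) (lastState s pre) steps →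
      wtP (M.probR' T) σ s pre steps * M.reachVal T (lastState s pre)
        = wtP M.prob σ s pre steps * M.reachVal T (lastState s (pre ++ steps)) := by
  intro steps
  induction steps with
  | nil => intro pre h; rw [wtP_nil, wtP_nil, List.append_nil]
  | cons x rest ih =>
    intro pre h
    obtain ⟨a, s'⟩ := x
    obtain ⟨hv, hopt1, hprob, hrest⟩ := h
    have hl : lastState s (pre ++ [(a, s')]) = s' := by rw [lastState_append]; rfl
    have hc0 : M.reachVal T (lastState s pre) ≠ 0 := hv.ne'
    have hctop : M.reachVal T (lastState s pre) ≠ ⊤ :=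
      (lt_of_le_of_lt (M.reachVal_le_one T _) ENNReal.one_lt_top).ne
    have hih := ih (pre ++ [(a, s')]) (by rw [hl]; exact hrest)
    rw [hl] at hih
    have hR : M.probR' T (lastState s pre) a s'
        = M.prob (lastState s pre) a s' * M.reachVal T s'
            / M.reachVal T (lastState s pre) := by
      unfold probR'
      rw [if_pos ⟨hopt1, hv⟩]
    rw [wtP_cons, wtP_cons, hR]
    have hassoc : pre ++ (a, s') :: rest = (pre ++ [(a, s')]) ++ rest := by simp
    rw [hassoc]
    rw [div_eq_mul_inv]
    have hring : σ s pre a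
          * (M.prob (lastState s pre) a s' * M.reachVal T s'
              * (M.reachVal T (lastState s pre))⁻¹)
          * wtP (M.probR' T) σ s (pre ++ [(a, s')]) rest
          * M.reachVal T (lastState s pre)
        = σ s pre a * M.prob (lastState s pre) a s'
            * (wtP (M.probR' T) σ s (pre ++ [(a, s')]) rest * M.reachVal T s')
            * ((M.reachVal T (lastState s pre))⁻¹ * M.reachVal T (lastState s pre)) := by
      ring
    rw [hring, ENNReal.inv_mul_cancel hc0 hctop, mul_one, hih]
    ring

theorem cylProbR'_eq (M : MDP S A) (T : Set S) (σ : Strat S A) (ρ : FPath S A)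
    (h : M.IsPathR' T ρ) :
    M.cylProbR' T σ ρ.start ρ * M.reachVal T ρ.start
      = M.cylProb σ ρ.start ρ * M.reachVal T ρ.last := by
  unfold cylProbR' cylProb cylProbP
  rw [if_pos rfl, if_pos rfl]
  exact M.wtP_pruned T σ ρ.start ρ.steps [] h

theorem isPathR'_of_pos (M : MDP S A) (T : Set S) (σ : Strat S A)
    (hopt : M.SigmaOptR T σ) (s₀ : S) :
    ∀ (steps pre : List (A × S)), M.IsPathFrom s₀ pre →
      M.IsPathFrom (lastState s₀ pre) steps →
      HitsFirst T (⟨lastState s₀ pre, steps⟩ : FPath S A) →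
      0 < wtP M.prob σ s₀ pre steps →
      M.IsPathFromPruned (M.reachVal T) (M.OptR T) (lastState s₀ pre) steps := by
  intro steps
  induction steps with
  | nil =>
    intro pre hpre hp hh hw
    exact M.reachVal_pos T hp hh
  | cons x rest ih =>
    intro pre hpre hp hh hw
    obtain ⟨a, s'⟩ := x
    obtain ⟨hleg, hprob, hrest⟩ := hp
    rw [wtP_cons] at hw
    rcases mul_ne_zero_iff.mp hw.ne' with ⟨hxy, hz⟩
    rcases mul_ne_zero_iff.mp hxy with ⟨hx, hy⟩
    have hσa : 0 < σ s₀ pre a := pos_iff_ne_zero.mpr hx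
    have hOpt : M.OptR T (lastState s₀ pre) a := hopt s₀ pre hpre a hσa
    have hp2 : M.IsPathFrom (lastState s₀ pre) ((a, s') :: rest) := ⟨hleg, hprob, hrest⟩
    have hcur : 0 < M.reachVal T (lastState s₀ pre) := M.reachVal_pos T hp2 hh
    have hl : lastState s₀ (pre ++ [(a, s')]) = s' := by rw [lastState_append]; rfl
    have hcurT : lastState s₀ pre ∉ T := by
      apply hh.2
      simp [FPath.states, List.dropLast_cons_of_ne_nil]
    have hh' : HitsFirst T (⟨s', rest⟩ : FPath S A) :=
      (hitsFirst_cons_iff hcurT a s' rest).mp hh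
    have hpre' : M.IsPathFrom s₀ (pre ++ [(a, s')]) :=
      M.isPathFrom_append hpre ⟨hleg, hprob, trivial⟩
    have hrec := ih (pre ++ [(a, s')]) hpre' (by rw [hl]; exact hrest)
      (by rw [hl]; exact hh') (pos_iff_ne_zero.mpr hz)
    rw [hl] at hrec
    exact ⟨hcur, hOpt, hprob, hrec⟩

theorem prReach'_div (M : MDP S A) (T : Set S) (σ : Strat S A) (hσ : M.IsStrategy σ)
    (hopt : M.SigmaOptR T σ) (s₀ : S) (hs₀ : 0 < M.reachVal T s₀) :
    M.prReach' σ s₀ T = M.prReach σ s₀ T * (M.reachVal T s₀)⁻¹ := by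
  have hc0 : M.reachVal T s₀ ≠ 0 := hs₀.ne'
  have hctop : M.reachVal T s₀ ≠ ⊤ :=
    (lt_of_le_of_lt (M.reachVal_le_one T s₀) ENNReal.one_lt_top).ne
  have h1 : ∀ ρ : {ρ : FPath S A // M.IsPathR' T ρ ∧ HitsFirst T ρ ∧ ρ.start = s₀},
      M.cylProbR' T σ s₀ ρ.1 = M.cylProb σ s₀ ρ.1 * (M.reachVal T s₀)⁻¹ := by
    intro ρ
    obtain ⟨hp', hh, hst⟩ := ρ.2
    have hkey := M.cylProbR'_eq T σ ρ.1 hp'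
    rw [hst, M.reachVal_mem hh.1, mul_one] at hkey
    rw [← hkey, mul_assoc, ENNReal.mul_inv_cancel hc0 hctop, mul_one]
  unfold prReach' prReach
  rw [tsum_congr h1, ENNReal.tsum_mul_right]
  congr 1
  -- ∑' over pruned hitting paths = ∑' over hitting paths
  have e1 := tsum_subtype {ρ : FPath S A | M.IsPathR' T ρ ∧ HitsFirst T ρ ∧ ρ.start = s₀}
    (M.cylProb σ s₀)
  have e2 := tsum_subtype {ρ : FPath S A | M.IsPath ρ ∧ HitsFirst T ρ ∧ ρ.start = s₀}
    (M.cylProb σ s₀)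
  refine e1.trans (Eq.trans (tsum_congr fun ρ => ?_) e2.symm)
  simp only [Set.indicator_apply, Set.mem_setOf_eq]
  by_cases hP' : M.IsPathR' T ρ ∧ HitsFirst T ρ ∧ ρ.start = s₀
  · rw [if_pos hP', if_pos ⟨M.isPathFrom_of_pruned T ρ.steps ρ.start hP'.1, hP'.2⟩]
  · rw [if_neg hP']
    by_cases hP : M.IsPath ρ ∧ HitsFirst T ρ ∧ ρ.start = s₀
    · rw [if_pos hP]
      obtain ⟨hpath, hhit, hst⟩ := hP
      symm
      by_contra hne
      apply hP'
      subst hst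
      refine ⟨?_, hhit, rfl⟩
      have hw : 0 < wtP M.prob σ ρ.start [] ρ.steps := by
        unfold cylProb cylProbP at hne
        rw [if_pos rfl] at hne
        exact pos_iff_ne_zero.mpr hne
      exact M.isPathR'_of_pos T σ hopt ρ.start ρ.steps [] trivial hpath hhit hw
    · rw [if_neg hP]

end MDP

end Aux5

/-- for `s₀ ∈ S'` and `σ ∈ Σ^Opt`,
`Pr_{σ,s₀}(◊T) = Val(s₀)` iff `Pr'_{σ,s₀}(◊T) = 1`. -/
theorem stmt4 {S : Type u} {A : Type v} [Fintype S] [Fintype A] [Nonempty S] [Nonempty A]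
    (M : MDP S A) (T : Set S) (hT : M.SinkSet T)
    (s₀ : S) (hs₀ : 0 < M.reachVal T s₀)
    (σ : Strat S A) (hσ : M.IsStrategy σ) (hopt : M.SigmaOptR T σ) :
    M.prReach σ s₀ T = M.reachVal T s₀ ↔ M.prReach' σ s₀ T = 1 := by
  have hctop : M.reachVal T s₀ ≠ ⊤ :=
    (lt_of_le_of_lt (M.reachVal_le_one T s₀) ENNReal.one_lt_top).ne
  rw [M.prReach'_div T σ hσ hopt s₀ hs₀, ← div_eq_mul_inv,
    ENNReal.div_eq_one_iff hs₀.ne' hctop]
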